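/- The symplectic group Sp(2n, F_2) is generated by symplectic transvections: the subgroup of Sp(2n, F_2) generated by the set of all matrices of transvections {Z_h : h ∈ F_2^{2n}} equals the whole group Sp(2n, F_2). -/

import Mathlib

open Matrix Finset

/-- `Λ(n)`: the `2n × 2n` block-diagonal matrix over `F₂` that is the direct sum of
`n` copies of `[[0,1],[1,0]]`. -/
def Lam (n : ℕ) : Matrix (Fin (2 * n)) (Fin (2 * n)) (ZMod 2) :=
  Matrix.of fun i j => if i.val / 2 = j.val / 2 ∧ i ≠ j then 1 else 0

/-- The symplectic inner product `⟨v, w⟩ = vᵀ Λ(n) w` on `F₂^{2n}`. -/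
def sip {n : ℕ} (v w : Fin (2 * n) → ZMod 2) : ZMod 2 :=
  v ⬝ᵥ (Lam n).mulVec w

/-- `Sp(2n, F₂)`: the set of `2n × 2n` matrices `S` over `F₂` with `S Λ(n) Sᵀ = Λ(n)`. -/
def Sp (n : ℕ) : Set (Matrix (Fin (2 * n)) (Fin (2 * n)) (ZMod 2)) :=
  {S | S * Lam n * Sᵀ = Lam n}

/-- The matrix of the symplectic transvection `Z_h`, so that
`(ZtMat h).mulVec v = v + ⟨v, h⟩ h`. -/
def ZtMat {n : ℕ} (h : Fin (2 * n) → ZMod 2) : Matrix (Fin (2 * n)) (Fin (2 * n)) (ZMod 2) :=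
  1 + Matrix.of fun i j => h i * (Lam n).mulVec h j

abbrev Vv (n : ℕ) := Fin (2 * n) → ZMod 2
abbrev Mat (n : ℕ) := Matrix (Fin (2 * n)) (Fin (2 * n)) (ZMod 2)

/-- the pairing involution i ↦ i xor 1 -/
def sg {n : ℕ} (i : Fin (2 * n)) : Fin (2 * n) :=
  ⟨if i.val % 2 = 0 then i.val + 1 else i.val - 1, by have := i.isLt; split <;> omega⟩

lemma sg_sg {n : ℕ} (i : Fin (2 * n)) : sg (sg i) = i := by
  simp only [sg]; apply Fin.ext; simp only
  have := i.isLt; split <;> split <;> omega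

lemma sg_ne {n : ℕ} (i : Fin (2 * n)) : sg i ≠ i := by
  simp only [sg, Ne, Fin.ext_iff]; have := i.isLt; split <;> omega

lemma Lam_apply {n : ℕ} (i j : Fin (2 * n)) :
    Lam n i j = if j = sg i then 1 else 0 := by
  simp only [Lam, Matrix.of_apply, sg, Ne, Fin.ext_iff]
  have hi := i.isLt; have hj := j.isLt
  by_cases h : i.val % 2 = 0 <;> simp only [h, if_true, if_false, reduceIte] <;>
    (congr 1; rw [eq_iff_iff]; constructor <;> intro hh) <;> omega

lemma Lam_mulVec {n : ℕ} (w : Vv n) : (Lam n).mulVec w = fun i => w (sg i) := by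
  funext i
  simp only [Matrix.mulVec, dotProduct, Lam_apply]
  rw [Finset.sum_eq_single (sg i)]
  · simp
  · intro b _ hb; simp [hb]
  · simp

lemma sip_eq_sum {n : ℕ} (v w : Vv n) : sip v w = ∑ i, v i * w (sg i) := by
  simp only [sip, Lam_mulVec, dotProduct]

lemma zmod2_add_self (x : ZMod 2) : x + x = 0 := by revert x; decide

lemma sip_self {n : ℕ} (v : Vv n) : sip v v = 0 := by
  rw [sip_eq_sum]
  apply Finset.sum_involution (fun i _ => sg i)
  · intro a _; rw [sg_sg, mul_comm]; exact zmod2_add_self _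
  · intro a _ _; exact sg_ne a
  · intro a _; exact Finset.mem_univ _
  · intro a _; exact sg_sg a

lemma sip_comm {n : ℕ} (v w : Vv n) : sip v w = sip w v := by
  rw [sip_eq_sum, sip_eq_sum]
  refine Finset.sum_nbij' sg sg (by simp) (by simp) (fun a _ => sg_sg a) (fun a _ => sg_sg a) ?_
  intro a _; rw [sg_sg, mul_comm]

lemma sip_add_left {n : ℕ} (u v w : Vv n) : sip (u + v) w = sip u w + sip v w := by
  simp [sip, add_dotProduct]

lemma sip_add_right {n : ℕ} (u v w : Vv n) : sip u (v + w) = sip u v + sip u w := by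
  rw [sip_comm, sip_add_left, sip_comm v u, sip_comm w u]

lemma sip_zero_left {n : ℕ} (w : Vv n) : sip 0 w = 0 := by simp [sip]

lemma sip_single_right {n : ℕ} (v : Vv n) (j : Fin (2 * n)) :
    sip v (Pi.single j 1) = v (sg j) := by
  rw [sip_eq_sum, Finset.sum_eq_single (sg j)]
  · rw [sg_sg, Pi.single_eq_same, mul_one]
  · intro b _ hb
    rw [Pi.single_eq_of_ne, mul_zero]
    intro hc; exact hb (by rw [← hc, sg_sg])
  · simp

/-- nondegeneracy -/
lemma sip_exists_one {n : ℕ} {v : Vv n} (hv : v ≠ 0) : ∃ w, sip v w = 1 := by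
  obtain ⟨i, hi⟩ : ∃ i, v i ≠ 0 := by
    by_contra h; push_neg at h; exact hv (funext fun i => h i)
  refine ⟨Pi.single (sg i) 1, ?_⟩
  rw [sip_single_right, sg_sg]
  revert hi; generalize v i = x; revert x; decide

lemma zt_mulVec {n : ℕ} (h v : Vv n) :
    (ZtMat h).mulVec v = v + fun i => sip v h * h i := by
  funext i
  simp only [ZtMat, Matrix.add_mulVec, Matrix.one_mulVec, Pi.add_apply]
  congr 1
  have hM : (Matrix.of fun i j => h i * (Lam n).mulVec h j)
      = Matrix.of (fun i j => h i * h (sg j)) := by rw [Lam_mulVec]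
  rw [hM]
  simp only [Matrix.mulVec, dotProduct, Matrix.of_apply]
  rw [sip_eq_sum, Finset.sum_mul]
  congr 1; funext j; ring

def Mh {n : ℕ} (h : Vv n) : Mat n := Matrix.of fun i j => h i * h (sg j)

lemma ZtMat_eq {n : ℕ} (h : Vv n) : ZtMat h = 1 + Mh h := by
  unfold ZtMat Mh; rw [Lam_mulVec]

lemma mul_lam_apply {n : ℕ} (A : Mat n) (i j : Fin (2 * n)) :
    (A * Lam n) i j = A i (sg j) := by
  simp only [Matrix.mul_apply, Lam_apply]
  rw [Finset.sum_eq_single (sg j)]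
  · rw [if_pos (by rw [sg_sg]), mul_one]
  · intro b _ hb
    rw [if_neg, mul_zero]
    intro hc; exact hb (by rw [hc, sg_sg])
  · simp

lemma lam_mul_apply {n : ℕ} (A : Mat n) (i j : Fin (2 * n)) :
    (Lam n * A) i j = A (sg i) j := by
  simp only [Matrix.mul_apply, Lam_apply]
  rw [Finset.sum_eq_single (sg i)]
  · simp
  · intro b _ hb; simp [hb]
  · simp

lemma lam_mul_lam {n : ℕ} : Lam n * Lam n = (1 : Mat n) := by
  ext i j
  rw [lam_mul_apply, Lam_apply, Matrix.one_apply]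
  congr 1
  rw [eq_iff_iff]
  constructor
  · intro h; rw [sg_sg] at h; exact h.symm
  · intro h; rw [h, sg_sg]

lemma Mh_mul_lam {n : ℕ} (h : Vv n) :
    Mh h * Lam n = Matrix.of fun i j => h i * h j := by
  ext i j; rw [mul_lam_apply]; simp [Mh, sg_sg]

lemma lam_mul_MhT {n : ℕ} (h : Vv n) :
    Lam n * (Mh h)ᵀ = Matrix.of fun i j => h i * h j := by
  ext i j; rw [lam_mul_apply]; simp [Mh, sg_sg, mul_comm]

lemma Mh_lam_MhT {n : ℕ} (h : Vv n) : Mh h * Lam n * (Mh h)ᵀ = 0 := by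
  ext i j
  rw [Mh_mul_lam]
  simp only [Matrix.mul_apply, Matrix.of_apply, Matrix.transpose_apply, Mh, Matrix.zero_apply]
  have : ∀ k, h i * h k * (h j * h (sg k)) = (h i * h j) * (h k * h (sg k)) := by intro k; ring
  simp only [this]
  rw [← Finset.mul_sum, ← sip_eq_sum, sip_self, mul_zero]

lemma Mh_mul_Mh {n : ℕ} (h : Vv n) : Mh h * Mh h = 0 := by
  ext i j
  simp only [Matrix.mul_apply, Mh, Matrix.of_apply, Matrix.zero_apply]
  have : ∀ k, h i * h (sg k) * (h k * h (sg j)) = (h i * h (sg j)) * (h k * h (sg k)) := by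
    intro k; ring
  simp only [this]
  rw [← Finset.mul_sum, ← sip_eq_sum, sip_self, mul_zero]

lemma zt_mul_zt {n : ℕ} (h : Vv n) : ZtMat h * ZtMat h = 1 := by
  rw [ZtMat_eq]
  have hM : Mh h + Mh h = 0 := by ext i j; exact zmod2_add_self _
  calc (1 + Mh h) * (1 + Mh h) = 1 + (Mh h + Mh h) + Mh h * Mh h := by noncomm_ring
    _ = 1 := by rw [hM, Mh_mul_Mh]; abel

lemma zt_mem_sp {n : ℕ} (h : Vv n) : ZtMat h ∈ Sp n := by
  show ZtMat h * Lam n * (ZtMat h)ᵀ = Lam n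
  rw [ZtMat_eq, Matrix.transpose_add, Matrix.transpose_one]
  have e1 : (1 + Mh h) * Lam n * (1 + (Mh h)ᵀ)
      = Lam n + (Mh h * Lam n + Lam n * (Mh h)ᵀ) + Mh h * Lam n * (Mh h)ᵀ := by noncomm_ring
  rw [e1, Mh_lam_MhT, Mh_mul_lam, lam_mul_MhT]
  have : (Matrix.of fun i j => h i * h j) + (Matrix.of fun i j => h i * h j) = (0 : Mat n) := by
    ext i j; exact zmod2_add_self _
  rw [this]; abel

lemma sp_one {n : ℕ} : (1 : Mat n) ∈ Sp n := by
  show (1 : Mat n) * Lam n * (1 : Mat n)ᵀ = Lam n; simp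

lemma sp_mul {n : ℕ} {A B : Mat n} (hA : A ∈ Sp n) (hB : B ∈ Sp n) : A * B ∈ Sp n := by
  show A * B * Lam n * (A * B)ᵀ = Lam n
  have hA' : A * Lam n * Aᵀ = Lam n := hA
  have hB' : B * Lam n * Bᵀ = Lam n := hB
  rw [Matrix.transpose_mul]
  calc A * B * Lam n * (Bᵀ * Aᵀ) = A * (B * Lam n * Bᵀ) * Aᵀ := by noncomm_ring
    _ = Lam n := by rw [hB', hA']

lemma sp_mul_inv {n : ℕ} {S : Mat n} (hS : S ∈ Sp n) : S * (Lam n * Sᵀ * Lam n) = 1 := by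
  have hS' : S * Lam n * Sᵀ = Lam n := hS
  calc S * (Lam n * Sᵀ * Lam n) = (S * Lam n * Sᵀ) * Lam n := by noncomm_ring
    _ = 1 := by rw [hS', lam_mul_lam]

lemma sp_inv_mul {n : ℕ} {S : Mat n} (hS : S ∈ Sp n) : (Lam n * Sᵀ * Lam n) * S = 1 :=
  mul_eq_one_comm.mp (sp_mul_inv hS)

lemma sp_transpose_rel {n : ℕ} {S : Mat n} (hS : S ∈ Sp n) : Sᵀ * Lam n * S = Lam n := by
  have h1 := sp_inv_mul hS
  have h2 : Lam n * ((Lam n * Sᵀ * Lam n) * S) = Lam n * 1 := by rw [h1]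
  calc Sᵀ * Lam n * S = Lam n * (Lam n * Sᵀ * Lam n * S) := by
        rw [show Lam n * (Lam n * Sᵀ * Lam n * S) = (Lam n * Lam n) * (Sᵀ * Lam n * S) by noncomm_ring,
          lam_mul_lam, one_mul]
    _ = Lam n := by rw [h1, mul_one]

lemma sp_preserves {n : ℕ} {S : Mat n} (hS : S ∈ Sp n) (v w : Vv n) :
    sip (S.mulVec v) (S.mulVec w) = sip v w := by
  unfold sip
  rw [Matrix.mulVec_mulVec, Matrix.dotProduct_mulVec, ← Matrix.vecMul_transpose,
    Matrix.vecMul_vecMul, ← Matrix.mul_assoc, sp_transpose_rel hS, Matrix.dotProduct_mulVec]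

def TP {n : ℕ} (L : List (Vv n)) : Mat n := (L.map ZtMat).prod

lemma TP_nil {n : ℕ} : TP ([] : List (Vv n)) = 1 := rfl

lemma TP_cons {n : ℕ} (h : Vv n) (L : List (Vv n)) :
    TP (h :: L) = ZtMat h * TP L := by simp [TP]

lemma TP_append {n : ℕ} (L1 L2 : List (Vv n)) : TP (L1 ++ L2) = TP L1 * TP L2 := by
  simp [TP]

lemma TP_mem_sp {n : ℕ} (L : List (Vv n)) : TP L ∈ Sp n := by
  induction L with
  | nil => exact sp_one
  | cons h L ih => rw [TP_cons]; exact sp_mul (zt_mem_sp h) ih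

lemma TP_cons_mulVec {n : ℕ} (h : Vv n) (L : List (Vv n)) (v : Vv n) :
    (TP (h :: L)).mulVec v = (ZtMat h).mulVec ((TP L).mulVec v) := by
  rw [TP_cons, Matrix.mulVec_mulVec]

lemma zmod2_cases (x : ZMod 2) : x = 0 ∨ x = 1 := by revert x; decide

lemma vv_add_cancel {n : ℕ} (u v : Vv n) : u + (u + v) = v := by
  funext i
  show u i + (u i + v i) = v i
  have : ∀ a b : ZMod 2, a + (a + b) = b := by decide
  exact this _ _

lemma zt_apply_one {n : ℕ} {h v : Vv n} (hv : sip v h = 1) :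
    (ZtMat h).mulVec v = v + h := by
  rw [zt_mulVec, hv]; funext i; simp

lemma zt_apply_zero {n : ℕ} {h v : Vv n} (hv : sip v h = 0) :
    (ZtMat h).mulVec v = v := by
  rw [zt_mulVec, hv]; funext i; simp

lemma zt_send {n : ℕ} {u v : Vv n} (huv : sip u v = 1) :
    (ZtMat (u + v)).mulVec u = v := by
  rw [zt_apply_one, vv_add_cancel]
  rw [sip_add_right, sip_self, huv, zero_add]

lemma sip_ne_zero_left {n : ℕ} {u v : Vv n} (h : sip u v = 1) : u ≠ 0 := by
  intro hu; rw [hu, sip_zero_left] at h; exact absurd h.symm (by decide)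

/-- transitivity on nonzero vectors -/
lemma trans_vec {n : ℕ} (u v : Vv n) (hu : u ≠ 0) (hv : v ≠ 0) :
    ∃ L : List (Vv n), (TP L).mulVec u = v := by
  by_cases huv : u = v
  · exact ⟨[], by rw [TP_nil, Matrix.one_mulVec, huv]⟩
  rcases zmod2_cases (sip u v) with h0 | h1
  swap
  · refine ⟨[u + v], ?_⟩
    rw [TP_cons, TP_nil, mul_one]
    exact zt_send h1
  · obtain ⟨a, ha⟩ := sip_exists_one hu
    obtain ⟨b, hb⟩ := sip_exists_one hv
    have hwex : ∃ w, sip u w = 1 ∧ sip v w = 1 := by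
      rcases zmod2_cases (sip v a) with hva | hva
      · rcases zmod2_cases (sip u b) with hub | hub
        · exact ⟨a + b, by rw [sip_add_right, ha, hub, add_zero],
            by rw [sip_add_right, hva, hb, zero_add]⟩
        · exact ⟨b, hub, hb⟩
      · exact ⟨a, ha, hva⟩
    obtain ⟨w, hw1, hw2⟩ := hwex
    refine ⟨[w + v, u + w], ?_⟩
    rw [TP_cons_mulVec, TP_cons, TP_nil, mul_one, zt_send hw1, zt_send]
    rw [sip_comm]; exact hw2

/-- transitivity on hyperbolic pairs -/
lemma trans_pair {n : ℕ} (u1 u2 v1 v2 : Vv n)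
    (hu : sip u1 u2 = 1) (hv : sip v1 v2 = 1) :
    ∃ L : List (Vv n), (TP L).mulVec u1 = v1 ∧ (TP L).mulVec u2 = v2 := by
  -- step 1: move u1 to v1
  obtain ⟨L1, hL1⟩ := trans_vec u1 v1 (sip_ne_zero_left hu) (sip_ne_zero_left hv)
  set u2' := (TP L1).mulVec u2 with hu2'
  have hp : sip v1 u2' = 1 := by
    rw [← hL1, hu2', sp_preserves (TP_mem_sp L1), hu]
  -- step 2: find L2 fixing v1 and sending u2' to v2
  have step2 : ∃ L2 : List (Vv n), (TP L2).mulVec v1 = v1 ∧ (TP L2).mulVec u2' = v2 := by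
    by_cases heq : u2' = v2
    · exact ⟨[], by rw [TP_nil, Matrix.one_mulVec], by rw [TP_nil, Matrix.one_mulVec, heq]⟩
    rcases zmod2_cases (sip u2' v2) with h0 | h1
    swap
    · refine ⟨[u2' + v2], ?_, ?_⟩
      · rw [TP_cons, TP_nil, mul_one]
        apply zt_apply_zero
        rw [sip_add_right, hp, hv]
        decide
      · rw [TP_cons, TP_nil, mul_one]; exact zt_send h1
    · set w := v1 + v2 with hwdef
      have hw1 : sip u2' w = 1 := by
        rw [hwdef, sip_add_right, h0, add_zero, sip_comm, hp]
      have hw2 : sip w v2 = 1 := by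
        rw [hwdef, sip_add_left, sip_self, hv, add_zero]
      have hv1w : sip v1 w = 1 := by
        rw [hwdef, sip_add_right, sip_self, hv, zero_add]
      refine ⟨[w + v2, u2' + w], ?_, ?_⟩
      · rw [TP_cons_mulVec, TP_cons, TP_nil, mul_one]
        rw [zt_apply_zero (v := v1), zt_apply_zero (v := v1)]
        · rw [sip_add_right, hv1w, hv]; decide
        · rw [sip_add_right, hp, hv1w]; decide
      · rw [TP_cons_mulVec, TP_cons, TP_nil, mul_one, zt_send hw1, zt_send hw2]
  obtain ⟨L2, hf, hs⟩ := step2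
  refine ⟨L2 ++ L1, ?_, ?_⟩
  · rw [TP_append, ← Matrix.mulVec_mulVec, hL1, hf]
  · rw [TP_append, ← Matrix.mulVec_mulVec, ← hu2', hs]

lemma sip_single_left {n : ℕ} (w : Vv n) (j : Fin (2 * n)) :
    sip (Pi.single j 1) w = w (sg j) := by
  rw [sip_comm, sip_single_right]

lemma TP_reverse_mul {n : ℕ} (L : List (Vv n)) : TP L.reverse * TP L = 1 := by
  induction L with
  | nil => simp [TP_nil]
  | cons h L ih =>
    rw [List.reverse_cons, TP_append, TP_cons, TP_cons, TP_nil, mul_one]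
    calc TP L.reverse * ZtMat h * (ZtMat h * TP L)
        = TP L.reverse * (ZtMat h * ZtMat h) * TP L := by noncomm_ring
      _ = 1 := by rw [zt_mul_zt, mul_one, ih]

/-- embedding `Fin (2n) → Fin (2(n+1))`, shifting by 2 -/
def ix {n : ℕ} (i : Fin (2 * n)) : Fin (2 * (n + 1)) := ⟨i.val + 2, by omega⟩

lemma sum_split {n : ℕ} (f : Fin (2 * (n + 1)) → ZMod 2) :
    ∑ i, f i = f ⟨0, by omega⟩ + f ⟨1, by omega⟩ + ∑ i : Fin (2 * n), f (ix i) := by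
  show ∑ i : Fin (2 * n + 1 + 1), f i = _
  rw [Fin.sum_univ_succ, Fin.sum_univ_succ]
  have h0 : ((0 : Fin (2 * n + 1 + 1))) = ⟨0, by omega⟩ := rfl
  have h1 : ((Fin.succ 0 : Fin (2 * n + 1 + 1))) = ⟨1, by omega⟩ := rfl
  have h2 : ∀ i : Fin (2 * n), (i.succ.succ : Fin (2 * n + 1 + 1)) = ix i := by
    intro i; apply Fin.ext; simp [ix]
  rw [h0, h1]
  simp only [h2]
  ring

lemma sg_ix {n : ℕ} (i : Fin (2 * n)) : sg (ix i) = ix (sg i) := by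
  apply Fin.ext
  simp only [sg, ix]
  show (if (i.val + 2) % 2 = 0 then i.val + 2 + 1 else i.val + 2 - 1) = (if i.val % 2 = 0 then i.val + 1 else i.val - 1) + 2
  by_cases h : i.val % 2 = 0
  · rw [if_pos (show (i.val + 2) % 2 = 0 by omega), if_pos h]
  · rw [if_neg (show ¬(i.val + 2) % 2 = 0 by omega), if_neg h]
    omega

/-- block-diagonal extension of a matrix by the 2×2 identity -/
def Emb {n : ℕ} (A : Mat n) : Mat (n + 1) :=
  Matrix.of fun i j =>
    if hi : 2 ≤ i.val then
      (if hj : 2 ≤ j.val then A ⟨i.val - 2, by omega⟩ ⟨j.val - 2, by omega⟩ else 0)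
    else (if i.val = j.val then 1 else 0)

/-- extension of a vector by two zero coordinates -/
def exv {n : ℕ} (h : Vv n) : Vv (n + 1) :=
  fun i => if hi : 2 ≤ i.val then h ⟨i.val - 2, by omega⟩ else 0

lemma Emb_apply_ix {n : ℕ} (A : Mat n) (i j : Fin (2 * n)) :
    Emb A (ix i) (ix j) = A i j := by
  simp only [Emb, ix, Matrix.of_apply]
  rw [dif_pos (by omega), dif_pos (by omega)]
  congr 1 <;> (apply Fin.ext; simp)

lemma Emb_one {n : ℕ} : Emb (1 : Mat n) = 1 := by
  ext i j
  simp only [Emb, Matrix.of_apply, Matrix.one_apply]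
  by_cases hi : 2 ≤ i.val
  · rw [dif_pos hi]
    by_cases hj : 2 ≤ j.val
    · rw [dif_pos hj]
      have : (⟨i.val - 2, by omega⟩ : Fin (2 * n)) = ⟨j.val - 2, by omega⟩ ↔ i = j := by
        rw [Fin.ext_iff, Fin.ext_iff]; simp; omega
      by_cases h : i = j
      · rw [if_pos h, if_pos (this.mpr h)]
      · rw [if_neg h, if_neg (fun hc => h (this.mp hc))]
    · rw [dif_neg hj, if_neg (fun hc : i = j => hj (hc ▸ hi))]
  · rw [dif_neg hi]
    simp [Fin.ext_iff]

lemma ix_of_ge {n : ℕ} {j : Fin (2 * (n + 1))} (hj : 2 ≤ j.val) :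
    ix (⟨j.val - 2, by omega⟩ : Fin (2 * n)) = j := by
  apply Fin.ext; simp [ix]; omega

lemma exv_ix {n : ℕ} (h : Vv n) (k : Fin (2 * n)) : exv h (ix k) = h k := by
  simp only [exv, ix]
  show (if hi : 2 ≤ k.val + 2 then h ⟨k.val + 2 - 2, by omega⟩ else 0) = h k
  rw [dif_pos (by omega)]
  congr 1

lemma exv_low {n : ℕ} (h : Vv n) {i : Fin (2 * (n + 1))} (hi : ¬ 2 ≤ i.val) :
    exv h i = 0 := by simp only [exv]; rw [dif_neg hi]

lemma sg_low {n : ℕ} {i : Fin (2 * (n + 1))} (hi : ¬ 2 ≤ i.val) : ¬ 2 ≤ (sg i).val := by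
  simp only [sg]; split <;> omega

lemma one_ix {n : ℕ} (a b : Fin (2 * n)) :
    (1 : Mat (n + 1)) (ix a) (ix b) = (1 : Mat n) a b := by
  rw [Matrix.one_apply, Matrix.one_apply]
  have : ix a = ix b ↔ a = b := by
    constructor
    · intro h; apply Fin.ext; have := Fin.ext_iff.mp h; simp [ix] at this; omega
    · intro h; rw [h]
  by_cases h : a = b
  · rw [if_pos h, if_pos (this.mpr h)]
  · rw [if_neg h, if_neg (fun hc => h (this.mp hc))]

lemma lam_ix {n : ℕ} (a b : Fin (2 * n)) :
    Lam (n + 1) (ix a) (ix b) = Lam n a b := by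
  rw [Lam_apply, Lam_apply, sg_ix]
  have : ix b = ix (sg a) ↔ b = sg a := by
    constructor
    · intro h; apply Fin.ext; have := Fin.ext_iff.mp h; simp [ix] at this; omega
    · intro h; rw [h]
  by_cases h : b = sg a
  · rw [if_pos h, if_pos (this.mpr h)]
  · rw [if_neg h, if_neg (fun hc => h (this.mp hc))]

lemma Emb_low_apply {n : ℕ} (A : Mat n) {i : Fin (2 * (n + 1))} (hi : ¬ 2 ≤ i.val)
    (j : Fin (2 * (n + 1))) : Emb A i j = if i.val = j.val then 1 else 0 := by
  simp only [Emb, Matrix.of_apply]; rw [dif_neg hi]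

lemma Emb_zero_apply {n : ℕ} (A : Mat n) {i j : Fin (2 * (n + 1))} (hi : 2 ≤ i.val)
    (hj : ¬ 2 ≤ j.val) : Emb A i j = 0 := by
  simp only [Emb, Matrix.of_apply]; rw [dif_pos hi, dif_neg hj]

lemma Emb_mul {n : ℕ} (A C : Mat n) : Emb (A * C) = Emb A * Emb C := by
  ext i j
  rw [Matrix.mul_apply]
  by_cases hi : 2 ≤ i.val
  · by_cases hj : 2 ≤ j.val
    · obtain ⟨a, rfl⟩ : ∃ a, ix a = i := ⟨_, ix_of_ge hi⟩
      obtain ⟨b, rfl⟩ : ∃ b, ix b = j := ⟨_, ix_of_ge hj⟩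
      rw [Emb_apply_ix, Matrix.mul_apply, sum_split]
      have h0 : Emb A (ix a) ⟨0, by omega⟩ = 0 := Emb_zero_apply A (by simp [ix]) (by simp)
      have h1 : Emb A (ix a) ⟨1, by omega⟩ = 0 := Emb_zero_apply A (by simp [ix]) (by simp)
      rw [h0, h1, zero_mul, zero_mul, zero_add, zero_add]
      apply Finset.sum_congr rfl
      intro k _
      rw [Emb_apply_ix, Emb_apply_ix]
    · rw [Emb_zero_apply _ hi hj]
      symm
      apply Finset.sum_eq_zero
      intro k _
      by_cases hk : 2 ≤ k.val
      · rw [Emb_zero_apply _ hk hj, mul_zero]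
      · rw [Emb_zero_apply _ hi hk, zero_mul]
  · rw [Emb_low_apply _ hi]
    rw [Finset.sum_eq_single i]
    · rw [Emb_low_apply _ hi i, if_pos rfl, one_mul, Emb_low_apply _ hi j]
    · intro k _ hk
      rw [Emb_low_apply _ hi k, if_neg (fun hc => hk (Fin.ext hc).symm), zero_mul]
    · simp

lemma Emb_zt {n : ℕ} (h : Vv n) : Emb (ZtMat h) = ZtMat (exv h) := by
  ext i j
  rw [ZtMat_eq, ZtMat_eq]
  have hRHS : (1 + Mh (exv h)) i j = (1 : Mat (n+1)) i j + exv h i * exv h (sg j) := rfl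
  rw [hRHS]
  by_cases hi : 2 ≤ i.val
  · by_cases hj : 2 ≤ j.val
    · obtain ⟨a, rfl⟩ : ∃ a, ix a = i := ⟨_, ix_of_ge hi⟩
      obtain ⟨b, rfl⟩ : ∃ b, ix b = j := ⟨_, ix_of_ge hj⟩
      rw [Emb_apply_ix, exv_ix, sg_ix, exv_ix, one_ix]
      rfl
    · rw [Emb_zero_apply _ hi hj, exv_low h (sg_low hj), mul_zero, add_zero, Matrix.one_apply,
        if_neg (fun hc : i = j => hj (hc ▸ hi)), ]
  · rw [Emb_low_apply _ hi, exv_low h hi, zero_mul, add_zero, Matrix.one_apply]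
    simp [Fin.ext_iff]

lemma Emb_TP {n : ℕ} (L : List (Vv n)) : Emb (TP L) = TP (L.map exv) := by
  induction L with
  | nil => rw [TP_nil, Emb_one]; rfl
  | cons h L ih => rw [TP_cons, Emb_mul, Emb_zt, ih, List.map_cons, TP_cons]

lemma mul_lam_mul_T_apply {n : ℕ} (A : Mat n) (i j : Fin (2 * n)) :
    (A * Lam n * Aᵀ) i j = ∑ l, A i (sg l) * A j l := by
  rw [Matrix.mul_apply]
  apply Finset.sum_congr rfl
  intro l _
  rw [mul_lam_apply, Matrix.transpose_apply]

/-- every symplectic matrix is a product of transvections -/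
lemma sp_prod (n : ℕ) : ∀ S : Mat n, S ∈ Sp n → ∃ L : List (Vv n), S = TP L := by
  induction n with
  | zero =>
    intro S _
    exact ⟨[], by ext i j; exact i.elim0⟩
  | succ n ih =>
    intro S hS
    set i0 : Fin (2 * (n + 1)) := ⟨0, by omega⟩ with hi0def
    set i1 : Fin (2 * (n + 1)) := ⟨1, by omega⟩ with hi1def
    have hsg0 : sg i0 = i1 := by apply Fin.ext; simp [sg, hi0def, hi1def]
    have hsg1 : sg i1 = i0 := by rw [← hsg0, sg_sg]
    set e0 : Vv (n + 1) := Pi.single i0 1 with he0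
    set e1 : Vv (n + 1) := Pi.single i1 1 with he1
    have hsip01 : sip e0 e1 = 1 := by
      rw [he0, sip_single_left, hsg0, he1, Pi.single_eq_same]
    have hS1 : sip (S.mulVec e0) (S.mulVec e1) = 1 := by
      rw [sp_preserves hS, hsip01]
    obtain ⟨L1, hT0, hT1⟩ := trans_pair (S.mulVec e0) (S.mulVec e1) e0 e1 hS1 hsip01
    set S' : Mat (n + 1) := TP L1 * S with hS'def
    have hS'sp : S' ∈ Sp (n + 1) := sp_mul (TP_mem_sp L1) hS
    have hc0 : S'.mulVec e0 = e0 := by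
      rw [hS'def, ← Matrix.mulVec_mulVec, hT0]
    have hc1 : S'.mulVec e1 = e1 := by
      rw [hS'def, ← Matrix.mulVec_mulVec, hT1]
    -- column facts
    have hcol0 : ∀ i, S' i i0 = (Pi.single i0 1 : Vv (n+1)) i := by
      intro i
      have := congr_fun hc0 i
      rw [he0, Matrix.mulVec_single] at this
      simpa using this
    have hcol1 : ∀ i, S' i i1 = (Pi.single i1 1 : Vv (n+1)) i := by
      intro i
      have := congr_fun hc1 i
      rw [he1, Matrix.mulVec_single] at this
      simpa using this
    -- row facts
    have hrow1 : ∀ j, S' i1 j = (Pi.single j 1 : Vv (n+1)) i1 := by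
      intro j
      have hp : ∀ v, (S'.mulVec v) i1 = v i1 := by
        intro v
        have h2 := sp_preserves hS'sp e0 v
        rw [hc0, he0, sip_single_left, sip_single_left, hsg0] at h2
        exact h2
      have := hp (Pi.single j 1)
      rw [Matrix.mulVec_single] at this
      simpa using this
    have hrow0 : ∀ j, S' i0 j = (Pi.single j 1 : Vv (n+1)) i0 := by
      intro j
      have hp : ∀ v, (S'.mulVec v) i0 = v i0 := by
        intro v
        have h2 := sp_preserves hS'sp e1 v
        rw [hc1, he1, sip_single_left, sip_single_left, hsg1] at h2
        exact h2
      have := hp (Pi.single j 1)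
      rw [Matrix.mulVec_single] at this
      simpa using this
    -- the restricted matrix
    set B : Mat n := Matrix.of fun i j => S' (ix i) (ix j) with hBdef
    have hixne0 : ∀ k : Fin (2 * n), ix k ≠ i0 := by
      intro k hc; have := Fin.ext_iff.mp hc; simp [ix, hi0def] at this
    have hixne1 : ∀ k : Fin (2 * n), ix k ≠ i1 := by
      intro k hc; have := Fin.ext_iff.mp hc; simp [ix, hi1def] at this; rw [Nat.mod_eq_of_lt (by omega)] at this; omega
    have hBsp : B ∈ Sp n := by
      show B * Lam n * Bᵀ = Lam n
      ext i j
      rw [mul_lam_mul_T_apply]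
      have hS'eq : S' * Lam (n + 1) * S'ᵀ = Lam (n + 1) := hS'sp
      have hentry := congr_fun (congr_fun hS'eq (ix i)) (ix j)
      rw [mul_lam_mul_T_apply, lam_ix] at hentry
      rw [← hentry, sum_split]
      have z0 : S' (ix j) i0 = 0 := by
        rw [hcol0 (ix j), Pi.single_eq_of_ne (hixne0 j)]
      have z1 : S' (ix j) i1 = 0 := by
        rw [hcol1 (ix j), Pi.single_eq_of_ne (hixne1 j)]
      rw [show (⟨0, by omega⟩ : Fin (2 * (n+1))) = i0 from rfl,
        show (⟨1, by omega⟩ : Fin (2 * (n+1))) = i1 from rfl, z0, z1, mul_zero, mul_zero,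
        zero_add, zero_add]
      apply Finset.sum_congr rfl
      intro k _
      rw [sg_ix]
      rfl
    -- S' is the embedding of B
    have hEmb : S' = Emb B := by
      ext i j
      by_cases hi : 2 ≤ i.val
      · by_cases hj : 2 ≤ j.val
        · obtain ⟨a, rfl⟩ : ∃ a, ix a = i := ⟨_, ix_of_ge hi⟩
          obtain ⟨b, rfl⟩ : ∃ b, ix b = j := ⟨_, ix_of_ge hj⟩
          rw [Emb_apply_ix]
          rfl
        · rw [Emb_zero_apply _ hi hj]
          have hj01 : j = i0 ∨ j = i1 := by
            have := j.isLt
            rcases (show j.val = 0 ∨ j.val = 1 by omega) with h | h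
            · exact Or.inl (Fin.ext h)
            · exact Or.inr (Fin.ext h)
          obtain ⟨a, rfl⟩ : ∃ a, ix a = i := ⟨_, ix_of_ge hi⟩
          rcases hj01 with rfl | rfl
          · rw [hcol0 (ix a), Pi.single_eq_of_ne (hixne0 a)]
          · rw [hcol1 (ix a), Pi.single_eq_of_ne (hixne1 a)]
      · rw [Emb_low_apply _ hi]
        have hi01 : i = i0 ∨ i = i1 := by
          have := i.isLt
          rcases (show i.val = 0 ∨ i.val = 1 by omega) with h | h
          · exact Or.inl (Fin.ext h)
          · exact Or.inr (Fin.ext h)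
        rcases hi01 with rfl | rfl
        · rw [hrow0 j, Pi.single_apply]
          simp [Fin.ext_iff, eq_comm]
        · rw [hrow1 j, Pi.single_apply]
          simp [Fin.ext_iff, eq_comm]
    obtain ⟨Lb, hLb⟩ := ih B hBsp
    refine ⟨L1.reverse ++ Lb.map exv, ?_⟩
    have hfin : TP L1.reverse * S' = S := by
      rw [hS'def, ← mul_assoc, TP_reverse_mul, one_mul]
    rw [TP_append, ← Emb_TP, ← hLb, ← hEmb, hfin]

lemma lam_transpose {n : ℕ} : (Lam n)ᵀ = Lam n := by
  ext i j
  rw [Matrix.transpose_apply]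
  simp only [Lam, Matrix.of_apply]
  have : (j.val / 2 = i.val / 2 ∧ j ≠ i) ↔ (i.val / 2 = j.val / 2 ∧ i ≠ j) := by
    constructor
    · rintro ⟨h1, h2⟩; exact ⟨h1.symm, h2.symm⟩
    · rintro ⟨h1, h2⟩; exact ⟨h1.symm, h2.symm⟩
  by_cases h : i.val / 2 = j.val / 2 ∧ i ≠ j
  · rw [if_pos h, if_pos (this.mpr h)]
  · rw [if_neg h, if_neg (fun hc => h (this.mp hc))]

lemma sp_inv_explicit {n : ℕ} {A : Mat n} (hA : A ∈ Sp n) :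
    Lam n * Aᵀ * Lam n ∈ Sp n := by
  show (Lam n * Aᵀ * Lam n) * Lam n * (Lam n * Aᵀ * Lam n)ᵀ = Lam n
  rw [Matrix.transpose_mul, Matrix.transpose_mul, lam_transpose, Matrix.transpose_transpose]
  have key : Lam n * Aᵀ * Lam n * Lam n * (Lam n * (A * Lam n))
      = Lam n * (Aᵀ * Lam n * A) * Lam n := by
    calc Lam n * Aᵀ * Lam n * Lam n * (Lam n * (A * Lam n))
        = Lam n * Aᵀ * (Lam n * Lam n) * Lam n * A * Lam n := by noncomm_ring
      _ = Lam n * (Aᵀ * Lam n * A) * Lam n := by rw [lam_mul_lam]; noncomm_ring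
  rw [key, sp_transpose_rel hA, lam_mul_lam, one_mul]

/-- the subgroup of units whose underlying matrices are symplectic -/
def SpGroup (n : ℕ) : Subgroup (Mat n)ˣ where
  carrier := {u | (u : Mat n) ∈ Sp n}
  one_mem' := by
    show ((1 : (Mat n)ˣ) : Mat n) ∈ Sp n
    rw [Units.val_one]; exact sp_one
  mul_mem' := by
    intro a b ha hb
    show ((a * b : (Mat n)ˣ) : Mat n) ∈ Sp n
    rw [Units.val_mul]; exact sp_mul ha hb
  inv_mem' := by
    intro u hu
    show ((u⁻¹ : (Mat n)ˣ) : Mat n) ∈ Sp n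
    have hinv : ((u⁻¹ : (Mat n)ˣ) : Mat n) = Lam n * (u : Mat n)ᵀ * Lam n := by
      have h1 : (u : Mat n) * (Lam n * (u : Mat n)ᵀ * Lam n) = 1 := sp_mul_inv hu
      calc ((u⁻¹ : (Mat n)ˣ) : Mat n)
          = ((u⁻¹ : (Mat n)ˣ) : Mat n) * ((u : Mat n) * (Lam n * (u : Mat n)ᵀ * Lam n)) := by
            rw [h1, mul_one]
        _ = (((u⁻¹ : (Mat n)ˣ) : Mat n) * (u : Mat n)) * (Lam n * (u : Mat n)ᵀ * Lam n) :=
            (mul_assoc _ _ _).symm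
        _ = Lam n * (u : Mat n)ᵀ * Lam n := by
            rw [← Units.val_mul, inv_mul_cancel, Units.val_one, one_mul]
    rw [hinv]
    exact sp_inv_explicit hu

/-- the transvection unit -/
def ztU {n : ℕ} (h : Vv n) : (Mat n)ˣ := ⟨ZtMat h, ZtMat h, zt_mul_zt h, zt_mul_zt h⟩


/-- `Sp(2n, F₂)` is generated by symplectic transvections: the subgroup (of the units
of the matrix ring) generated by the transvection matrices equals the whole group
`Sp(2n, F₂)`. -/
theorem sp_generated_by_transvections (n : ℕ) :
    (Subgroup.closure {u : (Matrix (Fin (2 * n)) (Fin (2 * n)) (ZMod 2))ˣ |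
        ∃ h, (u : Matrix (Fin (2 * n)) (Fin (2 * n)) (ZMod 2)) = ZtMat h} : Set _) =
      {u : (Matrix (Fin (2 * n)) (Fin (2 * n)) (ZMod 2))ˣ |
        (u : Matrix (Fin (2 * n)) (Fin (2 * n)) (ZMod 2)) ∈ Sp n} := by
  apply Set.eq_of_subset_of_subset
  · intro u hu
    have hle : Subgroup.closure {u : (Mat n)ˣ | ∃ h, (u : Mat n) = ZtMat h} ≤ SpGroup n := by
      apply Subgroup.closure_le (SpGroup n) |>.mpr
      rintro x ⟨h, hx⟩
      show (x : Mat n) ∈ Sp n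
      rw [hx]
      exact zt_mem_sp h
    exact hle hu
  · intro u hu
    obtain ⟨L, hL⟩ := sp_prod n (u : Mat n) hu
    have hu_eq : u = (L.map ztU).prod := by
      apply Units.ext
      rw [show ((L.map ztU).prod : Mat n) = (Units.coeHom (Mat n)) (L.map ztU).prod from rfl,
        map_list_prod, List.map_map]
      rw [hL]
      rfl
    rw [hu_eq]
    apply SetLike.mem_coe.mpr
    apply Subgroup.list_prod_mem
    intro x hx
    rw [List.mem_map] at hx
    obtain ⟨h, _, rfl⟩ := hx
    exact Subgroup.subset_closure ⟨h, rfl⟩
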